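/- Let ε ∈ (0,1/2], and let p and γ be integers with γ ≥ 1 and p ≥ 1 + 1/ε. Let α_0,…,α_{γp} and β_0,…,β_{γp} be real numbers satisfying α_a ≥ 0 and 0 ≤ β_a ≤ (1+2ε)·α_a for all 0 ≤ a ≤ γp, and β_{a+1} ≤ α_a + β_a for all 0 ≤ a ≤ γp−1. Then Σ_{a=0}^{γp−1} α_a + Σ_{ℓ=0}^{γ} β_{ℓp} + Σ_{ℓ=1}^{γ} β_{ℓp} ≤ (2+2ε)·Σ_{a=0}^{γp} α_a. -/
import Mathlib


/-- The arithmetic core of the stretch analysis of the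
`(2+ε)`-stretch non-Steiner tree cover: for `ε ∈ (0,1/2]`, integers `γ ≥ 1` and
`p ≥ 1 + 1/ε`, and sequences `α, β` with `α_a ≥ 0`, `0 ≤ β_a ≤ (1+2ε)·α_a`
(for `0 ≤ a ≤ γp`) and `β_{a+1} ≤ α_a + β_a` (for `0 ≤ a ≤ γp−1`), we have
`Σ_{a=0}^{γp−1} α_a + Σ_{ℓ=0}^{γ} β_{ℓp} + Σ_{ℓ=1}^{γ} β_{ℓp}
  ≤ (2+2ε)·Σ_{a=0}^{γp} α_a`. -/
theorem tree_cover_stretch_arithmetic (ε : ℝ) (hε : ε ∈ Set.Ioc (0 : ℝ) (1 / 2))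
    (p γ : ℕ) (hγ : 1 ≤ γ) (hp : (1 : ℝ) + 1 / ε ≤ (p : ℝ))
    (α β : ℕ → ℝ)
    (hα : ∀ a ≤ γ * p, 0 ≤ α a)
    (hβ0 : ∀ a ≤ γ * p, 0 ≤ β a)
    (hβα : ∀ a ≤ γ * p, β a ≤ (1 + 2 * ε) * α a)
    (hstep : ∀ a < γ * p, β (a + 1) ≤ α a + β a) :
    (∑ a ∈ Finset.range (γ * p), α a) + (∑ l ∈ Finset.range (γ + 1), β (l * p)) +
        (∑ l ∈ Finset.Icc 1 γ, β (l * p)) ≤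
      (2 + 2 * ε) * ∑ a ∈ Finset.range (γ * p + 1), α a := by
  obtain ⟨hε0, hε2⟩ := hε
  have hinv : (2:ℝ) ≤ 1 / ε := by
    rw [le_div_iff₀ hε0]; linarith
  have hpR : (3:ℝ) ≤ (p:ℝ) := by linarith
  have hpn : 3 ≤ p := by exact_mod_cast hpR
  have hkey : 1 + 2*ε ≤ 2*ε*((p:ℝ) - 1) := by
    have h1 : (1:ℝ)/ε ≤ (p:ℝ) - 1 := by linarith
    have h2 : (2:ℝ) ≤ 2*ε*((p:ℝ)-1) := by
      have := mul_le_mul_of_nonneg_left h1 (le_of_lt (by positivity : (0:ℝ) < 2*ε))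
      calc (2:ℝ) = 2*ε*(1/ε) := by field_simp
        _ ≤ 2*ε*((p:ℝ)-1) := this
    linarith
  -- telescoping
  have tel : ∀ b B, b ≤ B → B ≤ γ * p → β B ≤ (∑ a ∈ Finset.Ico b B, α a) + β b := by
    intro b B hbB hB
    induction B, hbB using Nat.le_induction with
    | base => simp
    | succ n hn ih =>
      have h1 : n < γ * p := by omega
      have h2 := ih (by omega)
      have h3 := hstep n h1
      rw [Finset.sum_Ico_succ_top hn]
      linarith
  -- block bound for second copies
  have block : ∀ l ∈ Finset.Icc 1 γ,
      β (l*p) ≤ (1 + 2*ε) * ∑ a ∈ Finset.Ico ((l-1)*p+1) (l*p), α a := by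
    intro l hl
    rw [Finset.mem_Icc] at hl
    obtain ⟨hl1, hlγ⟩ := hl
    have hAB : (l-1)*p + p = l*p := by
      have : l - 1 + 1 = l := by omega
      calc (l-1)*p + p = (l-1+1)*p := by ring
        _ = l*p := by rw [this]
    have hBγ : l*p ≤ γ*p := Nat.mul_le_mul_right p hlγ
    have hne : (Finset.Ico ((l-1)*p+1) (l*p)).Nonempty := by
      rw [Finset.nonempty_Ico]; omega
    obtain ⟨b, hb, hbmin⟩ := Finset.exists_min_image _ α hne
    rw [Finset.mem_Ico] at hb
    set S := ∑ a ∈ Finset.Ico ((l-1)*p+1) (l*p), α a with hS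
    have hS0 : 0 ≤ S := Finset.sum_nonneg fun a ha => by
      rw [Finset.mem_Ico] at ha; exact hα a (by omega)
    have h1 : β (l*p) ≤ (∑ a ∈ Finset.Ico b (l*p), α a) + β b :=
      tel b (l*p) hb.2.le hBγ
    have h2 : (∑ a ∈ Finset.Ico b (l*p), α a) ≤ S := by
      apply Finset.sum_le_sum_of_subset_of_nonneg
      · exact Finset.Ico_subset_Ico_left hb.1
      · intro a ha _; rw [Finset.mem_Ico] at ha; exact hα a (by omega)
    have h3 : β b ≤ (1+2*ε) * α b := hβα b (by omega)
    have hαb : 0 ≤ α b := hα b (by omega)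
    have h4 : ((p:ℝ) - 1) * α b ≤ S := by
      have hcard : (Finset.Ico ((l-1)*p+1) (l*p)).card = p - 1 := by
        rw [Nat.card_Ico]; omega
      have := Finset.card_nsmul_le_sum (Finset.Ico ((l-1)*p+1) (l*p)) α (α b)
        (fun a ha => hbmin a ha)
      rw [hcard, nsmul_eq_mul] at this
      have hc : ((p - 1 : ℕ) : ℝ) = (p:ℝ) - 1 := by
        have : 1 ≤ p := by omega
        push_cast [this]; ring
      rwa [hc] at this
    -- (1+2ε) α b ≤ 2ε S
    have h5 : (1+2*ε) * α b ≤ 2*ε*S := by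
      calc (1+2*ε) * α b ≤ (2*ε*((p:ℝ)-1)) * α b := by
            exact mul_le_mul_of_nonneg_right hkey hαb
        _ = 2*ε*(((p:ℝ)-1)*α b) := by ring
        _ ≤ 2*ε*S := by
            apply mul_le_mul_of_nonneg_left h4 (by positivity)
    calc β (l*p) ≤ S + β b := by linarith
      _ ≤ S + (1+2*ε)*α b := by linarith
      _ ≤ S + 2*ε*S := by linarith
      _ = (1+2*ε)*S := by ring
  -- partition identity
  have part : ∀ g : ℕ,
      (∑ l ∈ Finset.Icc 1 g, (α (l*p) + ∑ a ∈ Finset.Ico ((l-1)*p+1) (l*p), α a))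
        = ∑ a ∈ Finset.Ico 1 (g*p+1), α a := by
    intro g
    induction g with
    | zero => simp
    | succ n ih =>
      rw [Finset.sum_Icc_succ_top (by omega : 1 ≤ n+1), ih]
      have h1 : 1 ≤ n*p + 1 := by omega
      have h2 : n*p + 1 ≤ (n+1)*p + 1 := by
        have : n*p ≤ (n+1)*p := Nat.mul_le_mul_right p (by omega)
        omega
      rw [← Finset.sum_Ico_consecutive α h1 h2]
      have h3 : n*p + 1 ≤ (n+1)*p := by nlinarith [hpn]
      rw [show (n+1)*p + 1 = ((n+1)*p) + 1 from rfl, Finset.sum_Ico_succ_top h3]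
      have h4 : (n+1-1)*p = n*p := by simp
      rw [h4]
      ring
  -- split the range (γ+1) sum
  have hsplit : (∑ l ∈ Finset.range (γ + 1), β (l * p))
      = β 0 + ∑ l ∈ Finset.Icc 1 γ, β (l*p) := by
    have he : Finset.range (γ+1) = insert 0 (Finset.Icc 1 γ) := by
      ext x; simp only [Finset.mem_range, Finset.mem_insert, Finset.mem_Icc]; omega
    rw [he, Finset.sum_insert (by simp)]
    norm_num
  -- bounds on the three beta pieces
  have hb0 : β 0 ≤ (1+2*ε) * α 0 := hβα 0 (by omega)
  have hc1 : (∑ l ∈ Finset.Icc 1 γ, β (l*p)) ≤ (1+2*ε) * ∑ l ∈ Finset.Icc 1 γ, α (l*p) := by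
    rw [Finset.mul_sum]
    apply Finset.sum_le_sum
    intro l hl
    rw [Finset.mem_Icc] at hl
    exact hβα (l*p) (Nat.mul_le_mul_right p hl.2)
  have hc2 : (∑ l ∈ Finset.Icc 1 γ, β (l*p))
      ≤ (1+2*ε) * ∑ l ∈ Finset.Icc 1 γ, ∑ a ∈ Finset.Ico ((l-1)*p+1) (l*p), α a := by
    rw [Finset.mul_sum]
    exact Finset.sum_le_sum block
  -- total
  have hT : ∑ a ∈ Finset.range (γ*p + 1), α a
      = α 0 + ∑ a ∈ Finset.Ico 1 (γ*p+1), α a := by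
    rw [Finset.range_eq_Ico, Finset.sum_eq_sum_Ico_succ_bot (by positivity : 0 < γ*p+1)]
  have hRT : (∑ a ∈ Finset.range (γ*p), α a) ≤ ∑ a ∈ Finset.range (γ*p+1), α a := by
    rw [Finset.sum_range_succ]
    have := hα (γ*p) le_rfl
    linarith
  have hsum : (∑ l ∈ Finset.Icc 1 γ, α (l*p))
      + (∑ l ∈ Finset.Icc 1 γ, ∑ a ∈ Finset.Ico ((l-1)*p+1) (l*p), α a)
      = ∑ a ∈ Finset.Ico 1 (γ*p+1), α a := by
    rw [← part γ, Finset.sum_add_distrib]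
  have hεpos : (0:ℝ) ≤ 1 + 2*ε := by linarith
  -- assemble
  rw [hsplit]
  have expand : (2+2*ε) * ∑ a ∈ Finset.range (γ*p+1), α a
      = (∑ a ∈ Finset.range (γ*p+1), α a)
        + (1+2*ε) * (α 0 + ∑ a ∈ Finset.Ico 1 (γ*p+1), α a) := by
    rw [← hT]; ring
  rw [expand]
  have : (1+2*ε) * (α 0 + ∑ a ∈ Finset.Ico 1 (γ*p+1), α a)
      = (1+2*ε)*α 0 + (1+2*ε)*(∑ l ∈ Finset.Icc 1 γ, α (l*p))
        + (1+2*ε)*(∑ l ∈ Finset.Icc 1 γ, ∑ a ∈ Finset.Ico ((l-1)*p+1) (l*p), α a) := by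
    rw [← hsum]; ring
  rw [this]
  linarith
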